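/- Let W ∈ ℝ^{N×N} be a symmetric matrix with nonnegative entries and positive degrees, let W_c be its coarse graph with respect to a partition into n nonempty parts, let C ∈ ℝ^{n×N} be the normalized coarsening matrix, and let W_l be the lifted graph with degree matrix D_l. Then D_l^{-1/2} W_l D_l^{-1/2} = Cᵀ (D_c^{-1/2} W_c D_c^{-1/2}) C; equivalently, the normalized Laplacians satisfy L_l = I_N − CᵀC + Cᵀ L_c C. -/

import Mathlib

open Matrix BigOperators

noncomputable section

/-- Degree of node `i`: the `i`-th row sum of the weight matrix. -/
def deg {N : ℕ} (W : Matrix (Fin N) (Fin N) ℝ) (i : Fin N) : ℝ := ∑ j, W i j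

/-- `D^{-1/2}`: the diagonal matrix of inverse square roots of degrees. -/
def invSqrtDeg {N : ℕ} (W : Matrix (Fin N) (Fin N) ℝ) : Matrix (Fin N) (Fin N) ℝ :=
  Matrix.diagonal fun i => (Real.sqrt (deg W i))⁻¹

/-- Normalized Laplacian `L = I - D^{-1/2} W D^{-1/2}`. -/
def normLap {N : ℕ} (W : Matrix (Fin N) (Fin N) ℝ) : Matrix (Fin N) (Fin N) ℝ :=
  1 - invSqrtDeg W * W * invSqrtDeg W

/-- Random-walk transition matrix `D^{-1} W`. -/
def rwMat {N : ℕ} (W : Matrix (Fin N) (Fin N) ℝ) : Matrix (Fin N) (Fin N) ℝ :=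
  Matrix.diagonal (fun i => (deg W i)⁻¹) * W

/-- The 0/1 partition matrix `P` of the partition encoded by `f` (node `i` lies in part `f i`). -/
def partMat {N n : ℕ} (f : Fin N → Fin n) : Matrix (Fin n) (Fin N) ℝ :=
  fun p i => if f i = p then 1 else 0

/-- Size `|S_p|` of the part `p`. -/
def partSize {N n : ℕ} (f : Fin N → Fin n) (p : Fin n) : ℕ :=
  (Finset.univ.filter fun i => f i = p).card

/-- Coarse adjacency matrix `W_c = P W Pᵀ`. -/
def coarse {N n : ℕ} (f : Fin N → Fin n) (W : Matrix (Fin N) (Fin N) ℝ) :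
    Matrix (Fin n) (Fin n) ℝ :=
  partMat f * W * (partMat f)ᵀ

/-- Lifted adjacency matrix `W_l(i,j) = W_c(f i, f j) / (|S_{f i}|·|S_{f j}|)`. -/
def liftG {N n : ℕ} (f : Fin N → Fin n) (W : Matrix (Fin N) (Fin N) ℝ) :
    Matrix (Fin N) (Fin N) ℝ :=
  fun i j => coarse f W (f i) (f j) / ((partSize f (f i) : ℝ) * (partSize f (f j) : ℝ))

/-- Normalized coarsening matrix `C` with `C(p,i) = 1/√|S_p|` iff `i ∈ S_p`. -/
def coarsenMat {N n : ℕ} (f : Fin N → Fin n) : Matrix (Fin n) (Fin N) ℝ :=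
  fun p i => if f i = p then (Real.sqrt (partSize f p : ℝ))⁻¹ else 0

/-- Pseudo-inverse `P⁺` of the partition matrix, `P⁺(i,p) = 1/|S_p|` iff `i ∈ S_p`. -/
def pinvMat {N n : ℕ} (f : Fin N → Fin n) : Matrix (Fin N) (Fin n) ℝ :=
  fun i p => if f i = p then ((partSize f p : ℝ))⁻¹ else 0

/-- `μ` lists the eigenvalues of `A` in nondecreasing order (with multiplicity):
`μ` is monotone and the characteristic polynomial of `A` splits as `∏ (X - μ i)`. -/
def sortedEigs {m : ℕ} (A : Matrix (Fin m) (Fin m) ℝ) (μ : Fin m → ℝ) : Prop :=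
  Monotone μ ∧ A.charpoly = ∏ i, (Polynomial.X - Polynomial.C (μ i))

/-- Squared Frobenius norm of a matrix. -/
def frobSq {a b : ℕ} (M : Matrix (Fin a) (Fin b) ℝ) : ℝ := ∑ i, ∑ j, (M i j) ^ 2

/-- Partial spectral distance between sorted spectra `μ` (original, size `N`) and
`μc` (coarse, size `n`): `∑_{i=1}^k |μ(i) - μc(i)| + ∑_{i=k+1}^n |μc(i) - μ(i+N-n)|`,
where `k` is the largest index with `μc k < 1` (for monotone `μc`). -/
def SDpart {N n : ℕ} (h : n ≤ N) (μ : Fin N → ℝ) (μc : Fin n → ℝ) : ℝ :=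
  ∑ i : Fin n,
    if μc i < 1 then |μ (Fin.castLE h i) - μc i|
    else |μc i - μ ⟨i.1 + N - n, by have := i.2; omega⟩|

/-- Coarse degree is the sum of degrees over the part. -/
private lemma deg_coarse' {N n : ℕ} (W : Matrix (Fin N) (Fin N) ℝ) (f : Fin N → Fin n) (p : Fin n) :
    deg (coarse f W) p = ∑ i, if f i = p then deg W i else 0 := by
  unfold deg coarse
  simp only [Matrix.mul_apply, Matrix.transpose_apply, partMat]
  rw [Finset.sum_comm]
  simp [Finset.sum_ite_eq, Finset.mul_sum, Finset.sum_mul, ite_mul, mul_ite]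
  rw [Finset.sum_comm]
  congr 1; ext i
  split <;> simp [deg]

private lemma partSize_pos' {N n : ℕ} (f : Fin N → Fin n) (hsurj : Function.Surjective f)
    (p : Fin n) : 0 < partSize f p := by
  obtain ⟨i, hi⟩ := hsurj p
  exact Finset.card_pos.2 ⟨i, by simp [hi]⟩

private lemma deg_coarse_pos' {N n : ℕ} (W : Matrix (Fin N) (Fin N) ℝ)
    (hnonneg : ∀ i j, 0 ≤ W i j) (hdeg : ∀ i, 0 < deg W i)
    (f : Fin N → Fin n) (hsurj : Function.Surjective f) (p : Fin n) :
    0 < deg (coarse f W) p := by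
  rw [deg_coarse']
  obtain ⟨i, hi⟩ := hsurj p
  refine Finset.sum_pos' (fun j _ => ?_) ⟨i, Finset.mem_univ i, by simp [hi, hdeg i]⟩
  split
  · exact (hdeg j).le
  · exact le_refl 0

private lemma sum_fiber' {N n : ℕ} (f : Fin N → Fin n) (hsurj : Function.Surjective f)
    (g : Fin n → ℝ) : ∑ j : Fin N, g (f j) / (partSize f (f j) : ℝ) = ∑ q, g q := by
  rw [← Finset.sum_fiberwise Finset.univ f (fun j => g (f j) / (partSize f (f j) : ℝ))]
  refine Finset.sum_congr rfl fun q _ => ?_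
  have hcard : (0:ℝ) < (partSize f q : ℝ) := by exact_mod_cast partSize_pos' f hsurj q
  calc ∑ j ∈ Finset.univ.filter (fun j => f j = q), g (f j) / (partSize f (f j) : ℝ)
      = ∑ _j ∈ Finset.univ.filter (fun j => f j = q), g q / (partSize f q : ℝ) :=
        Finset.sum_congr rfl (fun j hj => by
          simp only [Finset.mem_filter, Finset.mem_univ, true_and] at hj
          rw [hj])
    _ = (partSize f q : ℝ) * (g q / (partSize f q : ℝ)) := by
        rw [Finset.sum_const, nsmul_eq_mul]; rfl
    _ = g q := by field_simp

private lemma deg_lift' {N n : ℕ} (W : Matrix (Fin N) (Fin N) ℝ) (f : Fin N → Fin n)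
    (hsurj : Function.Surjective f) (i : Fin N) :
    deg (liftG f W) i = deg (coarse f W) (f i) / (partSize f (f i) : ℝ) := by
  unfold deg liftG
  have h : ∀ j : Fin N, coarse f W (f i) (f j) / ((partSize f (f i) : ℝ) * (partSize f (f j) : ℝ))
      = (coarse f W (f i) (f j) / (partSize f (f j) : ℝ)) / (partSize f (f i) : ℝ) := by
    intro j; ring
  simp only [h, ← Finset.sum_div]
  rw [sum_fiber' f hsurj (fun q => coarse f W (f i) q)]

private lemma scalar_key' (a b sp sq w : ℝ) (ha : 0 < a) (hb : 0 < b)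
    (hsp : 0 < sp) (hsq : 0 < sq) :
    (Real.sqrt (a / sp))⁻¹ * (w / (sp * sq)) * (Real.sqrt (b / sq))⁻¹
      = (Real.sqrt sp)⁻¹ * ((Real.sqrt a)⁻¹ * w * (Real.sqrt b)⁻¹) * (Real.sqrt sq)⁻¹ := by
  rw [Real.sqrt_div ha.le, Real.sqrt_div hb.le]
  have h1 : Real.sqrt sp ≠ 0 := (Real.sqrt_pos.2 hsp).ne'
  have h2 : Real.sqrt sq ≠ 0 := (Real.sqrt_pos.2 hsq).ne'
  have h3 : Real.sqrt a ≠ 0 := (Real.sqrt_pos.2 ha).ne'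
  have h4 : Real.sqrt b ≠ 0 := (Real.sqrt_pos.2 hb).ne'
  have e1 : Real.sqrt sp * Real.sqrt sp = sp := Real.mul_self_sqrt hsp.le
  have e2 : Real.sqrt sq * Real.sqrt sq = sq := Real.mul_self_sqrt hsq.le
  field_simp
  linear_combination (w * Real.sqrt sq ^ 2) * e1 + (w * sp) * e2

/-- **Lifted normalized Laplacian via the coarsening matrix.**
`D_l^{-1/2} W_l D_l^{-1/2} = Cᵀ (D_c^{-1/2} W_c D_c^{-1/2}) C` and, equivalently,
`L_l = I - CᵀC + Cᵀ L_c C`. -/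
theorem lifted_normLap_eq {N n : ℕ} (W : Matrix (Fin N) (Fin N) ℝ)
    (hsymm : W.IsSymm) (hnonneg : ∀ i j, 0 ≤ W i j) (hdeg : ∀ i, 0 < deg W i)
    (f : Fin N → Fin n) (hsurj : Function.Surjective f) :
    invSqrtDeg (liftG f W) * liftG f W * invSqrtDeg (liftG f W) =
      (coarsenMat f)ᵀ *
        (invSqrtDeg (coarse f W) * coarse f W * invSqrtDeg (coarse f W)) * coarsenMat f ∧
    normLap (liftG f W) =
      1 - (coarsenMat f)ᵀ * coarsenMat f +
        (coarsenMat f)ᵀ * normLap (coarse f W) * coarsenMat f := by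
  have key : invSqrtDeg (liftG f W) * liftG f W * invSqrtDeg (liftG f W) =
      (coarsenMat f)ᵀ *
        (invSqrtDeg (coarse f W) * coarse f W * invSqrtDeg (coarse f W)) * coarsenMat f := by
    ext i j
    have hL : (invSqrtDeg (liftG f W) * liftG f W * invSqrtDeg (liftG f W)) i j
        = (Real.sqrt (deg (liftG f W) i))⁻¹ * liftG f W i j
            * (Real.sqrt (deg (liftG f W) j))⁻¹ := by
      simp [invSqrtDeg, Matrix.mul_diagonal, Matrix.diagonal_mul]
    have hR : ((coarsenMat f)ᵀ *
        (invSqrtDeg (coarse f W) * coarse f W * invSqrtDeg (coarse f W)) * coarsenMat f) i j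
        = (Real.sqrt (partSize f (f i) : ℝ))⁻¹ *
            ((Real.sqrt (deg (coarse f W) (f i)))⁻¹ * coarse f W (f i) (f j)
              * (Real.sqrt (deg (coarse f W) (f j)))⁻¹) *
            (Real.sqrt (partSize f (f j) : ℝ))⁻¹ := by
      simp [Matrix.mul_apply, coarsenMat, Matrix.transpose_apply, invSqrtDeg,
        Matrix.diagonal_mul, Matrix.mul_diagonal, ite_mul, mul_ite, mul_zero, zero_mul,
        Finset.sum_ite_eq, Finset.mul_sum, Finset.sum_mul]
      simp [Matrix.diagonal_apply, ite_mul, mul_ite, mul_zero, zero_mul,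
        Finset.sum_ite_eq, Finset.sum_ite_eq']
    rw [hL, hR, deg_lift' W f hsurj i, deg_lift' W f hsurj j]
    have hsp : (0:ℝ) < (partSize f (f i) : ℝ) := by exact_mod_cast partSize_pos' f hsurj (f i)
    have hsq : (0:ℝ) < (partSize f (f j) : ℝ) := by exact_mod_cast partSize_pos' f hsurj (f j)
    have ha := deg_coarse_pos' W hnonneg hdeg f hsurj (f i)
    have hb := deg_coarse_pos' W hnonneg hdeg f hsurj (f j)
    rw [show liftG f W i j = coarse f W (f i) (f j)
        / ((partSize f (f i) : ℝ) * (partSize f (f j) : ℝ)) from rfl]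
    exact scalar_key' _ _ _ _ _ ha hb hsp hsq
  refine ⟨key, ?_⟩
  have hc : invSqrtDeg (coarse f W) * coarse f W * invSqrtDeg (coarse f W)
      = 1 - normLap (coarse f W) := by
    unfold normLap; rw [sub_sub_cancel]
  unfold normLap
  rw [key, hc, Matrix.mul_sub, Matrix.mul_one, Matrix.sub_mul,
    sub_sub_eq_add_sub, sub_add_eq_add_sub, sub_sub_cancel]
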